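/- Let {u,v} be an edge of a simplicial complex K satisfying the Link Condition, and let K' be the contraction of u onto v. Then the f-polynomials satisfy f(K,t) = f(K',t) + t(1+t)·f(lk({u,v},K), t). -/
import Mathlib


open Finset

variable {V : Type*} [DecidableEq V]

/-- A (finite) simplicial complex, given by its finite family of faces:
closed under subsets and containing the empty set.  The vertices of `K` are
exactly the elements `v` with `{v} ∈ K`. -/
def IsComplex (K : Finset (Finset V)) : Prop :=
  ∅ ∈ K ∧ ∀ S ∈ K, ∀ T ⊆ S, T ∈ K

/-- The dimension of `K` : the maximum of `|F| - 1` over the faces `F` of `K`. -/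
def dimC (K : Finset (Finset V)) : ℤ :=
  ((K.sup Finset.card : ℕ) : ℤ) - 1

/-- `T` is a missing face of `K` : a set of vertices of `K` which is not a face of `K`
while all its proper subsets are faces of `K`. -/
def IsMissingFace (K : Finset (Finset V)) (T : Finset V) : Prop :=
  (∀ x ∈ T, ({x} : Finset V) ∈ K) ∧ T ∉ K ∧ ∀ S ⊂ T, S ∈ K

/-- The contraction of `u` onto `v` is admissible if no missing face of `K` of
dimension `≤ dim K` contains both `u` and `v`. -/
def Admissible (K : Finset (Finset V)) (u v : V) : Prop :=
  ∀ T : Finset V, IsMissingFace K T → (T.card : ℤ) - 1 ≤ dimC K → ¬(u ∈ T ∧ v ∈ T)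

/-- The contraction of `u` onto `v`:
`K' = {T ∈ K : u ∉ T} ∪ {(T \ {u}) ∪ {v} : u ∈ T ∈ K}`. -/
def contractC (K : Finset (Finset V)) (u v : V) : Finset (Finset V) :=
  K.filter (fun T => u ∉ T) ∪ (K.filter (fun T => u ∈ T)).image (fun T => insert v (T.erase u))

/-- The link of a face: `lk(S,K) = {T ∈ K : T ∩ S = ∅ ∧ T ∪ S ∈ K}`. -/
def linkC (K : Finset (Finset V)) (S : Finset V) : Finset (Finset V) :=
  K.filter (fun T => T ∩ S = ∅ ∧ T ∪ S ∈ K)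

/-- The `m`-skeleton: all faces of dimension at most `m`. -/
def skelC (K : Finset (Finset V)) (m : ℤ) : Finset (Finset V) :=
  K.filter (fun F => (F.card : ℤ) - 1 ≤ m)

/-- The `f`-polynomial `f(K,t) = Σ_{F ∈ K} t^{|F|}` (sum over all faces, including `∅`). -/
noncomputable def fPoly (K : Finset (Finset V)) : Polynomial ℤ :=
  ∑ F ∈ K, Polynomial.X ^ F.card

/-- If the edge `{u,v}` of `K` satisfies the Link Condition and `K'`
is the contraction of `u` onto `v`, then
`f(K,t) = f(K',t) + t(1+t)·f(lk({u,v},K), t)`. -/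
theorem fPoly_contraction
    (K : Finset (Finset V)) (hK : IsComplex K) (u v : V) (huv : u ≠ v)
    (he : ({u, v} : Finset V) ∈ K)
    (hLC : linkC K {u} ∩ linkC K {v} = linkC K {u, v}) :
    fPoly K = fPoly (contractC K u v) +
      Polynomial.X * (1 + Polynomial.X) * fPoly (linkC K {u, v}) := by
  classical
  obtain ⟨-, hsub⟩ := hK
  have hinter2 : ∀ (S : Finset V), S ∩ ({u, v} : Finset V) = ∅ ↔ u ∉ S ∧ v ∉ S := by
    intro S
    rw [Finset.eq_empty_iff_forall_notMem]
    simp only [mem_inter, mem_insert, mem_singleton, not_and, not_or]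
    constructor
    · intro h; exact ⟨fun hu => (h u hu).1 rfl, fun hv => (h v hv).2 rfl⟩
    · rintro ⟨h1, h2⟩ x hx; exact ⟨fun h => h1 (h ▸ hx), fun h => h2 (h ▸ hx)⟩
  have hinter1 : ∀ (S : Finset V) (w : V), w ∉ S → S ∩ ({w} : Finset V) = ∅ := by
    intro S w hw
    rw [Finset.eq_empty_iff_forall_notMem]
    simp only [mem_inter, mem_singleton, not_and]
    intro x hx h; exact hw (h ▸ hx)
  set A : Finset (Finset V) := K.filter (fun T => u ∉ T) with hA
  set B1 : Finset (Finset V) := K.filter (fun T => u ∈ T ∧ v ∉ T) with hB1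
  set B2 : Finset (Finset V) := K.filter (fun T => u ∈ T ∧ v ∈ T) with hB2
  set L : Finset (Finset V) := linkC K {u, v} with hL
  set φ : Finset V → Finset V := fun T => insert v (T.erase u) with hφ
  have memA : ∀ T, T ∈ A ↔ T ∈ K ∧ u ∉ T := by intro T; simp [hA]
  have memB1 : ∀ T, T ∈ B1 ↔ T ∈ K ∧ u ∈ T ∧ v ∉ T := by intro T; simp [hB1]
  have memB2 : ∀ T, T ∈ B2 ↔ T ∈ K ∧ u ∈ T ∧ v ∈ T := by intro T; simp [hB2]
  have memL : ∀ S, S ∈ L ↔ S ∈ K ∧ (u ∉ S ∧ v ∉ S) ∧ S ∪ {u, v} ∈ K := by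
    intro S
    rw [hL]
    simp only [linkC, mem_filter, hinter2]
  -- Step 1: partition of K
  have hKeq : K = (A ∪ B1) ∪ B2 := by
    ext T
    simp only [mem_union, memA, memB1, memB2]
    by_cases hu : u ∈ T <;> by_cases hv : v ∈ T <;> tauto
  have d1 : Disjoint A B1 := by
    rw [Finset.disjoint_left]
    intro T hT hT'
    rw [memA] at hT; rw [memB1] at hT'
    exact hT.2 hT'.2.1
  have d2 : Disjoint (A ∪ B1) B2 := by
    rw [Finset.disjoint_left]
    intro T hT hT'
    rw [memB2] at hT'
    rcases Finset.mem_union.mp hT with h | h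
    · exact ((memA T).mp h).2 hT'.2.1
    · exact ((memB1 T).mp h).2.2 hT'.2.2
  have hsplit : fPoly K = (∑ F ∈ A, (Polynomial.X : Polynomial ℤ) ^ F.card)
      + (∑ F ∈ B1, (Polynomial.X : Polynomial ℤ) ^ F.card)
      + (∑ F ∈ B2, (Polynomial.X : Polynomial ℤ) ^ F.card) := by
    unfold fPoly
    rw [hKeq, Finset.sum_union d2, Finset.sum_union d1]
  -- Step 2: the contraction as a union
  have hCeq : contractC K u v = A ∪ B1.image φ := by
    ext F
    simp only [contractC, mem_union, mem_filter, mem_image, memA, hB1, hφ]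
    constructor
    · rintro (⟨hFK, hFu⟩ | ⟨T, hT, rfl⟩)
      · exact Or.inl ⟨hFK, hFu⟩
      · obtain ⟨hTK, hTu⟩ := hT
        by_cases hv : v ∈ T
        · left
          have h1 : insert v (T.erase u) = T.erase u :=
            Finset.insert_eq_self.mpr (Finset.mem_erase.mpr ⟨huv.symm, hv⟩)
          rw [h1]
          exact ⟨hsub T hTK _ (Finset.erase_subset _ _), Finset.notMem_erase u T⟩
        · exact Or.inr ⟨T, ⟨hTK, hTu, hv⟩, rfl⟩
    · rintro (⟨hFK, hFu⟩ | ⟨T, hT, rfl⟩)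
      · exact Or.inl ⟨hFK, hFu⟩
      · exact Or.inr ⟨T, ⟨hT.1, hT.2.1⟩, rfl⟩
  -- Step 3: the overlap, via the Link Condition
  have hOver : A ∩ B1.image φ = B2.image (fun R => R.erase u) := by
    ext F
    simp only [mem_inter, mem_image, memA, memB1, memB2]
    constructor
    · rintro ⟨⟨hFK, hFu⟩, T, ⟨hTK, hTu, hTv⟩, rfl⟩
      have hSK : T.erase u ∈ K := hsub T hTK _ (Finset.erase_subset _ _)
      have hSu : u ∉ T.erase u := Finset.notMem_erase _ _
      have hSv : v ∉ T.erase u := fun h => hTv (Finset.mem_of_mem_erase h)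
      have hSLu : T.erase u ∈ linkC K {u} := by
        simp only [linkC, mem_filter]
        refine ⟨hSK, hinter1 _ _ hSu, ?_⟩
        rw [Finset.union_comm, ← Finset.insert_eq, Finset.insert_erase hTu]
        exact hTK
      have hSLv : T.erase u ∈ linkC K {v} := by
        simp only [linkC, mem_filter]
        refine ⟨hSK, hinter1 _ _ hSv, ?_⟩
        rw [Finset.union_comm, ← Finset.insert_eq]
        exact hFK
      have hSL : T.erase u ∈ L := by
        rw [← hLC] at *
        exact Finset.mem_inter.mpr ⟨hSLu, hSLv⟩
      have hRK : T.erase u ∪ {u, v} ∈ K := ((memL _).mp hSL).2.2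
      have hRe : insert v T = T.erase u ∪ {u, v} := by
        ext x
        simp only [mem_insert, mem_union, mem_erase, mem_singleton]
        constructor
        · rintro (rfl | hx)
          · exact Or.inr (Or.inr rfl)
          · by_cases hxu : x = u
            · exact Or.inr (Or.inl hxu)
            · exact Or.inl ⟨hxu, hx⟩
        · rintro (⟨hxu, hx⟩ | rfl | rfl)
          · exact Or.inr hx
          · exact Or.inr hTu
          · exact Or.inl rfl
      refine ⟨insert v T, ⟨hRe ▸ hRK, Finset.mem_insert_of_mem hTu,
        Finset.mem_insert_self v T⟩, ?_⟩
      ext x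
      simp only [hφ, mem_erase, mem_insert]
      constructor
      · rintro ⟨hxu, rfl | hx⟩
        · exact Or.inl rfl
        · exact Or.inr ⟨hxu, hx⟩
      · rintro (rfl | ⟨hxu, hx⟩)
        · exact ⟨huv.symm, Or.inl rfl⟩
        · exact ⟨hxu, Or.inr hx⟩
    · rintro ⟨R, ⟨hRK, hRu, hRv⟩, rfl⟩
      refine ⟨⟨hsub R hRK _ (Finset.erase_subset _ _), Finset.notMem_erase _ _⟩,
        R.erase v, ⟨hsub R hRK _ (Finset.erase_subset _ _),
          Finset.mem_erase.mpr ⟨huv, hRu⟩, Finset.notMem_erase _ _⟩, ?_⟩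
      ext x
      simp only [hφ, mem_insert, mem_erase]
      constructor
      · rintro (rfl | ⟨hxu, hxv, hx⟩)
        · exact ⟨huv.symm, hRv⟩
        · exact ⟨hxu, hx⟩
      · rintro ⟨hxu, hx⟩
        by_cases hxv : x = v
        · exact Or.inl hxv
        · exact Or.inr ⟨hxu, hxv, hx⟩
  -- Step 4: sums over images
  have hφinv : ∀ T ∈ B1, insert u ((φ T).erase v) = T := by
    intro T hT
    rw [memB1] at hT
    have h1 : v ∉ T.erase u := fun h => hT.2.2 (Finset.mem_of_mem_erase h)
    rw [hφ]
    simp only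
    rw [Finset.erase_insert h1, Finset.insert_erase hT.2.1]
  have hφinj : ∀ T1 ∈ B1, ∀ T2 ∈ B1, φ T1 = φ T2 → T1 = T2 := by
    intro T1 h1 T2 h2 h
    rw [← hφinv T1 h1, ← hφinv T2 h2, h]
  have hcardφ : ∀ T ∈ B1, (φ T).card = T.card := by
    intro T hT
    rw [memB1] at hT
    obtain ⟨hTK, hTu, hTv⟩ := hT
    have h1 : v ∉ T.erase u := fun h => hTv (Finset.mem_of_mem_erase h)
    have h2 : (1 : ℕ) ≤ T.card := Finset.card_pos.mpr ⟨u, hTu⟩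
    rw [hφ]
    simp only
    rw [Finset.card_insert_of_notMem h1, Finset.card_erase_of_mem hTu]
    omega
  have hsumB1 : ∑ F ∈ B1.image φ, (Polynomial.X : Polynomial ℤ) ^ F.card
      = ∑ T ∈ B1, (Polynomial.X : Polynomial ℤ) ^ T.card := by
    rw [Finset.sum_image hφinj]
    exact Finset.sum_congr rfl (fun T hT => by rw [hcardφ T hT])
  have hψinj : ∀ R1 ∈ B2, ∀ R2 ∈ B2, R1.erase u = R2.erase u → R1 = R2 := by
    intro R1 h1 R2 h2 h
    rw [memB2] at h1 h2
    rw [← Finset.insert_erase h1.2.1, ← Finset.insert_erase h2.2.1, h]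
  have hsumOver : ∑ F ∈ A ∩ B1.image φ, (Polynomial.X : Polynomial ℤ) ^ F.card
      = ∑ R ∈ B2, (Polynomial.X : Polynomial ℤ) ^ (R.erase u).card := by
    rw [hOver, Finset.sum_image hψinj]
  -- Step 5: the bijection between B2 and the link L
  set i : Finset V → Finset V := fun R => (R.erase u).erase v with hi_def
  set j : Finset V → Finset V := fun S => insert u (insert v S) with hj_def
  have hjeq : ∀ S : Finset V, j S = S ∪ {u, v} := by
    intro S
    ext x
    simp only [hj_def, mem_insert, mem_union, mem_singleton]
    tauto
  have hi : ∀ R ∈ B2, i R ∈ L := by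
    intro R hR
    rw [memB2] at hR
    obtain ⟨hRK, hRu, hRv⟩ := hR
    have hmem : ∀ x, x ∈ i R ↔ x ≠ v ∧ x ≠ u ∧ x ∈ R := by
      intro x; simp [hi_def, Finset.mem_erase, and_assoc]
    have hiu : u ∉ i R := by rw [hmem]; tauto
    have hiv : v ∉ i R := by rw [hmem]; tauto
    have hiK : i R ∈ K := hsub R hRK _ (fun x hx => ((hmem x).mp hx).2.2)
    have hun : i R ∪ {u, v} = R := by
      ext x
      simp only [mem_union, mem_singleton, mem_insert, hmem]
      constructor
      · rintro (⟨-, -, hx⟩ | rfl | rfl) <;> assumption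
      · intro hx
        by_cases hxu : x = u
        · exact Or.inr (Or.inl hxu)
        · by_cases hxv : x = v
          · exact Or.inr (Or.inr hxv)
          · exact Or.inl ⟨hxv, hxu, hx⟩
    rw [memL]
    exact ⟨hiK, ⟨hiu, hiv⟩, by rw [hun]; exact hRK⟩
  have hj : ∀ S ∈ L, j S ∈ B2 := by
    intro S hS
    rw [memL] at hS
    rw [memB2, hjeq]
    exact ⟨hS.2.2, by simp, by simp⟩
  have hji : ∀ R ∈ B2, j (i R) = R := by
    intro R hR
    rw [memB2] at hR
    ext x
    simp only [hj_def, hi_def, mem_insert, mem_erase]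
    constructor
    · rintro (rfl | rfl | ⟨-, -, hx⟩)
      · exact hR.2.1
      · exact hR.2.2
      · exact hx
    · intro hx
      by_cases hxu : x = u
      · exact Or.inl hxu
      · by_cases hxv : x = v
        · exact Or.inr (Or.inl hxv)
        · exact Or.inr (Or.inr ⟨hxv, hxu, hx⟩)
  have hij : ∀ S ∈ L, i (j S) = S := by
    intro S hS
    rw [memL] at hS
    obtain ⟨-, ⟨hSu, hSv⟩, -⟩ := hS
    ext x
    simp only [hi_def, hj_def, mem_erase, mem_insert]
    constructor
    · rintro ⟨hxv, hxu, rfl | rfl | hx⟩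
      · exact absurd rfl hxu
      · exact absurd rfl hxv
      · exact hx
    · intro hx
      exact ⟨fun h => hSv (h ▸ hx), fun h => hSu (h ▸ hx), Or.inr (Or.inr hx)⟩
  have hcard2 : ∀ R ∈ B2, R.card = (i R).card + 2 := by
    intro R hR
    have hiL := hi R hR
    rw [memL] at hiL
    obtain ⟨-, ⟨hiu, hiv⟩, -⟩ := hiL
    conv_lhs => rw [← hji R hR]
    rw [hj_def]
    simp only
    rw [Finset.card_insert_of_notMem (by simp [Finset.mem_insert, huv, hiu]),
      Finset.card_insert_of_notMem hiv]
  have hcard1 : ∀ R ∈ B2, (R.erase u).card = (i R).card + 1 := by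
    intro R hR
    have hiL := hi R hR
    rw [memL] at hiL
    obtain ⟨-, ⟨hiu, hiv⟩, -⟩ := hiL
    have hRv : v ∈ R.erase u := by
      rw [memB2] at hR
      exact Finset.mem_erase.mpr ⟨huv.symm, hR.2.2⟩
    have : R.erase u = insert v (i R) := by
      rw [hi_def]
      simp only
      rw [Finset.insert_erase hRv]
    rw [this, Finset.card_insert_of_notMem hiv]
  have hS2 : ∑ R ∈ B2, (Polynomial.X : Polynomial ℤ) ^ R.card
      = ∑ S ∈ L, (Polynomial.X : Polynomial ℤ) ^ (S.card + 2) :=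
    Finset.sum_nbij' i j hi hj hji hij (fun R hR => by rw [hcard2 R hR])
  have hS1 : ∑ R ∈ B2, (Polynomial.X : Polynomial ℤ) ^ (R.erase u).card
      = ∑ S ∈ L, (Polynomial.X : Polynomial ℤ) ^ (S.card + 1) :=
    Finset.sum_nbij' i j hi hj hji hij (fun R hR => by rw [hcard1 R hR])
  -- Step 6: assembly
  have hfK' : fPoly (contractC K u v)
      = (∑ F ∈ A, (Polynomial.X : Polynomial ℤ) ^ F.card)
        + (∑ T ∈ B1, (Polynomial.X : Polynomial ℤ) ^ T.card)
        - ∑ S ∈ L, (Polynomial.X : Polynomial ℤ) ^ (S.card + 1) := by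
    have hui := Finset.sum_union_inter (s₁ := A) (s₂ := B1.image φ)
      (f := fun F => (Polynomial.X : Polynomial ℤ) ^ F.card)
    rw [hsumB1, hsumOver, hS1] at hui
    unfold fPoly
    rw [hCeq]
    linear_combination hui
  have hRHS : Polynomial.X * (1 + Polynomial.X) * fPoly L
      = ∑ S ∈ L, ((Polynomial.X : Polynomial ℤ) ^ (S.card + 1)
        + (Polynomial.X : Polynomial ℤ) ^ (S.card + 2)) := by
    unfold fPoly
    rw [Finset.mul_sum]
    exact Finset.sum_congr rfl (fun S hS => by ring)
  rw [hsplit, hfK', hRHS, hS2, Finset.sum_add_distrib]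
  ring
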